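/- Let X be a topological vector space, f, g proper continuous convex functions on X, and α ∈ ℝ. If f, g have the intersection property on X at level α and {f ≤ α} ∩ {g ≤ α} ≠ ∅, then there exist x₁ ∈ dom(f), x₂ ∈ dom(g) and φ₁ ∈ ∂_{Φ_conv} f(x₁), φ₂ ∈ ∂_{Φ_conv} g(x₂) such that φ₁ and φ₂ have the intersection property on X at every level β ≤ α. -/

import Mathlib

open scoped Topology

lemma ereal_coe_le_of_forall_lt {a : EReal} {b : ℝ}
    (h : ∀ t : ℝ, a < (t : EReal) → b ≤ t) : (b : EReal) ≤ a := by
  by_contra hc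
  push_neg at hc
  obtain ⟨t, hat, htb⟩ := EReal.exists_between_coe_real hc
  exact absurd (h t hat) (by exact_mod_cast not_le.2 htb)

lemma ereal_combo_lt {X : Type*} [AddCommGroup X] [Module ℝ X] {f : X → EReal}
    (hf : ∀ x y : X, ∀ t : ℝ, 0 ≤ t → t ≤ 1 →
      f (t • x + (1 - t) • y) ≤ (t : EReal) * f x + ((1 - t : ℝ) : EReal) * f y)
    {x y : X} {s t : ℝ} (hx : f x < (s : EReal)) (hy : f y < (t : EReal))
    {a : ℝ} (ha : 0 ≤ a) (ha1 : a ≤ 1) :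
    f (a • x + (1 - a) • y) < ((a * s + (1 - a) * t : ℝ) : EReal) := by
  obtain ⟨s', hs1, hs2⟩ := EReal.exists_between_coe_real hx
  obtain ⟨t', ht1, ht2⟩ := EReal.exists_between_coe_real hy
  have hs2' : s' < s := by exact_mod_cast hs2
  have ht2' : t' < t := by exact_mod_cast ht2
  have h1 : (a : EReal) * f x ≤ ((a * s' : ℝ) : EReal) := by
    rw [EReal.coe_mul]
    exact mul_le_mul_of_nonneg_left hs1.le (by exact_mod_cast ha)
  have h2 : ((1 - a : ℝ) : EReal) * f y ≤ (((1 - a) * t' : ℝ) : EReal) := by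
    rw [EReal.coe_mul]
    exact mul_le_mul_of_nonneg_left ht1.le (by exact_mod_cast sub_nonneg.2 ha1)
  calc f (a • x + (1 - a) • y) ≤ (a : EReal) * f x + ((1 - a : ℝ) : EReal) * f y :=
        hf x y a ha ha1
    _ ≤ ((a * s' : ℝ) : EReal) + (((1 - a) * t' : ℝ) : EReal) := add_le_add h1 h2
    _ = ((a * s' + (1 - a) * t' : ℝ) : EReal) := by rw [← EReal.coe_add]
    _ < ((a * s + (1 - a) * t : ℝ) : EReal) := by
        apply EReal.coe_lt_coe_iff.2
        rcases lt_or_eq_of_le ha with hpos | hzero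
        · nlinarith
        · nlinarith

lemma ereal_combo_lt' {X : Type*} [AddCommGroup X] [Module ℝ X] {f : X → EReal}
    (hf : ∀ x y : X, ∀ t : ℝ, 0 ≤ t → t ≤ 1 →
      f (t • x + (1 - t) • y) ≤ (t : EReal) * f x + ((1 - t : ℝ) : EReal) * f y)
    {x y : X} {s t : ℝ} (hx : f x < (s : EReal)) (hy : f y ≤ (t : EReal))
    {a : ℝ} (ha : 0 < a) (ha1 : a ≤ 1) :
    f (a • x + (1 - a) • y) < ((a * s + (1 - a) * t : ℝ) : EReal) := by
  obtain ⟨s', hs1, hs2⟩ := EReal.exists_between_coe_real hx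
  have hs2' : s' < s := by exact_mod_cast hs2
  have h1 : (a : EReal) * f x ≤ ((a * s' : ℝ) : EReal) := by
    rw [EReal.coe_mul]
    exact mul_le_mul_of_nonneg_left hs1.le (by exact_mod_cast ha.le)
  have h2 : ((1 - a : ℝ) : EReal) * f y ≤ (((1 - a) * t : ℝ) : EReal) := by
    rw [EReal.coe_mul]
    exact mul_le_mul_of_nonneg_left hy (by exact_mod_cast sub_nonneg.2 ha1)
  calc f (a • x + (1 - a) • y) ≤ (a : EReal) * f x + ((1 - a : ℝ) : EReal) * f y :=
        hf x y a ha.le ha1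
    _ ≤ ((a * s' : ℝ) : EReal) + (((1 - a) * t : ℝ) : EReal) := add_le_add h1 h2
    _ = ((a * s' + (1 - a) * t : ℝ) : EReal) := by rw [← EReal.coe_add]
    _ < ((a * s + (1 - a) * t : ℝ) : EReal) := by
        apply EReal.coe_lt_coe_iff.2; nlinarith

lemma mem_closure_sublevel {X : Type*} [AddCommGroup X] [Module ℝ X] [TopologicalSpace X]
    [IsTopologicalAddGroup X] [ContinuousSMul ℝ X] {f : X → EReal}
    (hf : ∀ x y : X, ∀ t : ℝ, 0 ≤ t → t ≤ 1 →
      f (t • x + (1 - t) • y) ≤ (t : EReal) * f x + ((1 - t : ℝ) : EReal) * f y)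
    {x₀ y : X} {α : ℝ} (hx₀ : f x₀ ≤ (α : EReal)) (hy : f y < (α : EReal)) :
    x₀ ∈ closure {x | f x < (α : EReal)} := by
  have htend : Filter.Tendsto (fun t : ℝ => t • y + (1 - t) • x₀) (𝓝[>] (0:ℝ)) (𝓝 x₀) := by
    have : Filter.Tendsto (fun t : ℝ => t • y + (1 - t) • x₀) (𝓝 (0:ℝ)) (𝓝 x₀) := by
      have hc : Continuous (fun t : ℝ => t • y + (1 - t) • x₀) := by
        exact (continuous_id.smul continuous_const).add
          ((continuous_const.sub continuous_id).smul continuous_const)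
      have := hc.tendsto 0
      simpa using this
    exact this.mono_left nhdsWithin_le_nhds
  apply mem_closure_of_tendsto htend
  filter_upwards [Ioo_mem_nhdsGT_of_mem (Set.left_mem_Ico.2 one_pos)] with t ht
  have := ereal_combo_lt' hf hy hx₀ ht.1 ht.2.le
  rw [show t * α + (1-t) * α = α by ring] at this
  exact this

section Key
variable {X : Type*} [AddCommGroup X] [Module ℝ X] [TopologicalSpace X]
    [IsTopologicalAddGroup X] [ContinuousSMul ℝ X]

/-- the strict epigraph of a convex continuous function is open and convex -/
lemma strict_epi_open {f : X → EReal} (hcont : Continuous f) :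
    IsOpen {p : X × ℝ | f p.1 < ((p.2 : ℝ) : EReal)} :=
  isOpen_lt (hcont.comp continuous_fst) (continuous_coe_real_ereal.comp continuous_snd)

lemma strict_epi_convex {f : X → EReal}
    (hf : ∀ x y : X, ∀ t : ℝ, 0 ≤ t → t ≤ 1 →
      f (t • x + (1 - t) • y) ≤ (t : EReal) * f x + ((1 - t : ℝ) : EReal) * f y) :
    Convex ℝ {p : X × ℝ | f p.1 < ((p.2 : ℝ) : EReal)} := by
  rintro ⟨x, s⟩ hx ⟨y, t⟩ hy a b ha hb hab
  have hb' : b = 1 - a := by linarith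
  subst hb'
  have := ereal_combo_lt hf hx hy ha (by linarith)
  simpa using this

lemma key_subgrad {f : X → EReal}
    (hconv : ∀ x y : X, ∀ t : ℝ, 0 ≤ t → t ≤ 1 →
      f (t • x + (1 - t) • y) ≤ (t : EReal) * f x + ((1 - t : ℝ) : EReal) * f y)
    (hcont : Continuous f)
    {C : Set X} (hCo : IsOpen C) (hCc : Convex ℝ C)
    {x₀ : X} (hx₀C : x₀ ∈ closure C) {α : ℝ} (hfx₀ : f x₀ = (α : EReal))
    (hge : ∀ x ∈ C, (α : EReal) ≤ f x) :
    ∃ ℓ : X →L[ℝ] ℝ,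
      (∀ x, ((α + (ℓ x - ℓ x₀) : ℝ) : EReal) ≤ f x) ∧ (∀ x ∈ C, ℓ x₀ ≤ ℓ x) := by
  set A : Set (X × ℝ) := {p : X × ℝ | f p.1 < ((p.2 : ℝ) : EReal)} with hA
  set B : Set (X × ℝ) := C ×ˢ Set.Iio α with hBdef
  have hdisj : Disjoint A B := by
    rw [Set.disjoint_left]
    rintro ⟨x, t⟩ hxA ⟨hxC, ht⟩
    have h1 : f x < ((t : ℝ) : EReal) := hxA
    have h2 : ((t : ℝ) : EReal) < (α : EReal) := EReal.coe_lt_coe_iff.2 ht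
    exact absurd (hge x hxC) (not_le.2 (h1.trans h2))
  obtain ⟨Φ, u, hΦA, hΦB⟩ := geometric_hahn_banach_open_open
    (strict_epi_convex hconv) (strict_epi_open hcont) (hCc.prod (convex_Iio α))
    (hCo.prod isOpen_Iio) hdisj
  set r : ℝ := Φ (0, 1) with hr
  set L : X →L[ℝ] ℝ := Φ.comp (ContinuousLinearMap.inl ℝ X ℝ) with hL
  have hdecomp : ∀ (x : X) (t : ℝ), Φ (x, t) = L x + t * r := by
    intro x t
    have : (x, t) = (x, (0:ℝ)) + t • ((0:X), (1:ℝ)) := by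
      simp [Prod.ext_iff]
    rw [this, map_add, map_smul]
    simp [hL, hr, ContinuousLinearMap.inl_apply, smul_eq_mul]
  have hA' : ∀ (x : X) (t : ℝ), f x < (t : EReal) → L x + t * r < u := by
    intro x t hxt
    have := hΦA (x, t) hxt
    rwa [hdecomp] at this
  have hB' : ∀ x ∈ C, ∀ t : ℝ, t < α → u < L x + t * r := by
    intro x hx t ht
    have := hΦB (x, t) ⟨hx, ht⟩
    rwa [hdecomp] at this
  -- r ≤ 0
  have hrle : r ≤ 0 := by
    by_contra hpos
    push_neg at hpos
    set t : ℝ := max (α + 1) ((u - L x₀) / r + 1) with htdef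
    have h1 : f x₀ < (t : EReal) := by
      rw [hfx₀]
      exact EReal.coe_lt_coe_iff.2 (lt_of_lt_of_le (by linarith) (le_max_left _ _))
    have h2 := hA' x₀ t h1
    have h3 : (u - L x₀) / r + 1 ≤ t := le_max_right _ _
    have h4 : u - L x₀ + r ≤ t * r := by
      have h5 : ((u - L x₀) / r + 1) * r ≤ t * r := mul_le_mul_of_nonneg_right h3 hpos.le
      rw [add_mul, div_mul_cancel₀ _ (ne_of_gt hpos), one_mul] at h5
      exact h5
    linarith
  -- closure bound: ∀ x ∈ closure C, u ≤ L x + α * r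
  have hclos : ∀ x ∈ closure C, u ≤ L x + α * r := by
    have hsub : C ⊆ {x : X | u ≤ L x + α * r} := by
      intro x hx
      have htend : Filter.Tendsto (fun t : ℝ => L x + t * r) (𝓝[<] α)
          (𝓝 (L x + α * r)) :=
        ((continuous_const.add (continuous_id.mul continuous_const)).tendsto α).mono_left
          nhdsWithin_le_nhds
      exact ge_of_tendsto htend (by
        filter_upwards [self_mem_nhdsWithin] with t ht
        exact (hB' x hx t ht).le)
    have hcl : IsClosed {x : X | u ≤ L x + α * r} :=
      isClosed_le continuous_const (L.continuous.add continuous_const)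
    exact fun x hx => (closure_minimal hsub hcl) hx
  have hux₀ : u ≤ L x₀ + α * r := hclos x₀ hx₀C
  -- r < 0
  have hrneg : r < 0 := by
    rcases lt_or_eq_of_le hrle with h | h
    · exact h
    · exfalso
      have h1 : f x₀ < ((α + 1 : ℝ) : EReal) := by
        rw [hfx₀]; exact EReal.coe_lt_coe_iff.2 (by linarith)
      have h2 := hA' x₀ (α + 1) h1
      rw [h] at h2 hux₀
      simp only [mul_zero, add_zero] at h2 hux₀
      linarith
  -- the global affine minorant
  have hlow : ∀ x : X, (((u - L x) / r : ℝ) : EReal) ≤ f x := by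
    intro x
    apply ereal_coe_le_of_forall_lt
    intro t ht
    have h2 := hA' x t ht
    have : t * r < u - L x := by linarith
    exact ((div_lt_iff_of_neg hrneg).2 this).le
  -- value at x₀
  have hval : u = L x₀ + α * r := by
    have h1 : (((u - L x₀) / r : ℝ) : EReal) ≤ ((α : ℝ) : EReal) := hfx₀ ▸ hlow x₀
    have h2 : (u - L x₀) / r ≤ α := EReal.coe_le_coe_iff.1 h1
    have h3 : α * r ≤ u - L x₀ := by
      rw [div_le_iff_of_neg hrneg] at h2; linarith
    linarith
  refine ⟨(-r)⁻¹ • L, ?_, ?_⟩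
  · intro x
    have happ : ((-r)⁻¹ • L) x = (-r)⁻¹ * L x := rfl
    have happ₀ : ((-r)⁻¹ • L) x₀ = (-r)⁻¹ * L x₀ := rfl
    have hr0 : r ≠ 0 := ne_of_lt hrneg
    have heq : α + ((-r)⁻¹ * L x - (-r)⁻¹ * L x₀) = (u - L x) / r := by
      rw [hval]
      field_simp
      have hinv : r * r⁻¹ = 1 := mul_inv_cancel₀ hr0
      linear_combination
    rw [happ, happ₀, heq]
    exact hlow x
  · intro x hx
    have h1 := hclos x (subset_closure hx)
    rw [hval] at h1
    have h2 : L x₀ ≤ L x := by linarith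
    have : ((-r)⁻¹ • L) x₀ = (-r)⁻¹ * L x₀ := rfl
    have h3 : (0:ℝ) ≤ (-r)⁻¹ := inv_nonneg.2 (by linarith)
    calc ((-r)⁻¹ • L) x₀ = (-r)⁻¹ * L x₀ := rfl
      _ ≤ (-r)⁻¹ * L x := mul_le_mul_of_nonneg_left h2 h3
      _ = ((-r)⁻¹ • L) x := rfl

lemma exists_subgrad_aux {f : X → EReal}
    (hconv : ∀ x y : X, ∀ t : ℝ, 0 ≤ t → t ≤ 1 →
      f (t • x + (1 - t) • y) ≤ (t : EReal) * f x + ((1 - t : ℝ) : EReal) * f y)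
    (hcont : Continuous f) {x₀ : X} {v : ℝ} (hfx₀ : f x₀ = (v : EReal)) :
    ∃ ℓ : X →L[ℝ] ℝ, ∀ x, ((v + (ℓ x - ℓ x₀) : ℝ) : EReal) ≤ f x := by
  have hnot : ((x₀, v) : X × ℝ) ∉ {p : X × ℝ | f p.1 < ((p.2 : ℝ) : EReal)} := by
    simp only [Set.mem_setOf_eq, hfx₀]
    exact lt_irrefl _
  obtain ⟨Φ, hΦA⟩ := geometric_hahn_banach_open_point
    (strict_epi_convex hconv) (strict_epi_open hcont) hnot
  set r : ℝ := Φ (0, 1) with hr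
  set L : X →L[ℝ] ℝ := Φ.comp (ContinuousLinearMap.inl ℝ X ℝ) with hL
  have hdecomp : ∀ (x : X) (t : ℝ), Φ (x, t) = L x + t * r := by
    intro x t
    have : (x, t) = (x, (0:ℝ)) + t • ((0:X), (1:ℝ)) := by
      simp [Prod.ext_iff]
    rw [this, map_add, map_smul]
    simp [hL, hr, ContinuousLinearMap.inl_apply, smul_eq_mul]
  set u : ℝ := L x₀ + v * r with hu
  have hA' : ∀ (x : X) (t : ℝ), f x < (t : EReal) → L x + t * r < u := by
    intro x t hxt
    have := hΦA (x, t) hxt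
    rwa [hdecomp, hdecomp] at this
  have hrneg : r < 0 := by
    have h1 : f x₀ < ((v + 1 : ℝ) : EReal) := by
      rw [hfx₀]; exact EReal.coe_lt_coe_iff.2 (by linarith)
    have h2 := hA' x₀ (v + 1) h1
    rw [hu] at h2
    nlinarith
  have hr0 : r ≠ 0 := ne_of_lt hrneg
  have hlow : ∀ x : X, (((u - L x) / r : ℝ) : EReal) ≤ f x := by
    intro x
    apply ereal_coe_le_of_forall_lt
    intro t ht
    have h2 := hA' x t ht
    have : t * r < u - L x := by linarith
    exact ((div_lt_iff_of_neg hrneg).2 this).le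
  refine ⟨(-r)⁻¹ • L, fun x => ?_⟩
  have heq : v + ((-r)⁻¹ * L x - (-r)⁻¹ * L x₀) = (u - L x) / r := by
    rw [hu]
    field_simp
    have hinv : r * r⁻¹ = 1 := mul_inv_cancel₀ hr0
    linear_combination
  have happ : ∀ y : X, ((-r)⁻¹ • L) y = (-r)⁻¹ * L y := fun y => rfl
  rw [happ, happ, heq]
  exact hlow x

end Key

def edom {X : Type*} (f : X → EReal) : Set X := {x | f x ≠ ⊤}

def ERealConvexOn {X : Type*} [AddCommGroup X] [Module ℝ X] (f : X → EReal) : Prop :=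
  ∀ x y : X, ∀ t : ℝ, 0 ≤ t → t ≤ 1 →
    f (t • x + (1 - t) • y) ≤ (t : EReal) * f x + ((1 - t : ℝ) : EReal) * f y

/-- The class `Φ_conv` of continuous affine functions. -/
def PhiConvCls (X : Type*) [AddCommGroup X] [Module ℝ X] [TopologicalSpace X] :
    Set (X → ℝ) :=
  {φ | ∃ (ℓ : X →L[ℝ] ℝ) (c : ℝ), ∀ x, φ x = ℓ x + c}

/-- The `Φ_conv`-subdifferential of `f` at `x₀`. -/
def SubdiffConv {X : Type*} [AddCommGroup X] [Module ℝ X] [TopologicalSpace X]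
    (f : X → EReal) (x₀ : X) : Set (X → ℝ) :=
  {φ | φ ∈ PhiConvCls X ∧ ∀ x, ((φ x - φ x₀ : ℝ) : EReal) + f x₀ ≤ f x}

def IntersectionProperty {X : Type*} (φ₁ φ₂ : X → ℝ) (α : ℝ) : Prop :=
  {x | φ₁ x < α} ∩ {x | φ₂ x < α} = ∅

lemma affine_mem_subdiff {X : Type*} [AddCommGroup X] [Module ℝ X] [TopologicalSpace X]
    {f : X → EReal} {xb : X} {v : ℝ} (hfxb : f xb = (v : EReal)) (ℓ : X →L[ℝ] ℝ)
    (h : ∀ x, ((v + (ℓ x - ℓ xb) : ℝ) : EReal) ≤ f x) :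
    (fun x => ℓ x + (v - ℓ xb)) ∈ SubdiffConv f xb := by
  refine ⟨⟨ℓ, v - ℓ xb, fun x => rfl⟩, fun x => ?_⟩
  rw [hfxb, ← EReal.coe_add]
  have heq : ((ℓ x + (v - ℓ xb)) - (ℓ xb + (v - ℓ xb)) : ℝ) + v = v + (ℓ x - ℓ xb) := by ring
  rw [heq]
  exact h x

lemma sublevel_convex {X : Type*} [AddCommGroup X] [Module ℝ X] {f : X → EReal}
    (hconv : ERealConvexOn f) (α : ℝ) : Convex ℝ {x | f x < (α : EReal)} := by
  rintro x hx y hy a b ha hb hab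
  have hb' : b = 1 - a := by linarith
  subst hb'
  have := ereal_combo_lt hconv hx hy ha (by linarith)
  rwa [show a * α + (1 - a) * α = α by ring] at this

theorem intersection_property_conv_subgradients_all_levels
    {X : Type*} [AddCommGroup X] [Module ℝ X] [TopologicalSpace X]
    [IsTopologicalAddGroup X] [ContinuousSMul ℝ X] [LocallyConvexSpace ℝ X]
    (f g : X → EReal) (hfbot : ∀ x, f x ≠ ⊥) (hgbot : ∀ x, g x ≠ ⊥)
    (hfproper : (edom f).Nonempty) (hgproper : (edom g).Nonempty)
    (hfconv : ERealConvexOn f) (hgconv : ERealConvexOn g)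
    (hfcont : Continuous f) (hgcont : Continuous g)
    (α : ℝ)
    (hIP : {x | f x < (α : EReal)} ∩ {x | g x < (α : EReal)} = ∅)
    (hmeet : ({x | f x ≤ (α : EReal)} ∩ {x | g x ≤ (α : EReal)}).Nonempty) :
    ∃ x₁ ∈ edom f, ∃ x₂ ∈ edom g,
      ∃ φ₁ ∈ SubdiffConv f x₁, ∃ φ₂ ∈ SubdiffConv g x₂,
        ∀ β : ℝ, β ≤ α → IntersectionProperty φ₁ φ₂ β := by
  obtain ⟨xb, hxbf, hxbg⟩ := hmeet
  rw [Set.mem_setOf_eq] at hxbf hxbg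
  have hIP' : ∀ x, f x < (α : EReal) → g x < (α : EReal) → False := by
    intro x h1 h2
    have hx : x ∈ ({x | f x < (α : EReal)} ∩ {x | g x < (α : EReal)}) := ⟨h1, h2⟩
    rw [hIP] at hx
    exact hx
  have hfdom : xb ∈ edom f := (hxbf.trans_lt (EReal.coe_lt_top α)).ne
  have hgdom : xb ∈ edom g := (hxbg.trans_lt (EReal.coe_lt_top α)).ne
  by_cases hUne : ∃ y, f y < (α : EReal)
  · by_cases hVne : ∃ y, g y < (α : EReal)
    · -- main case
      have hfg : ∀ x, f x ≤ (α : EReal) → (α : EReal) ≤ g x := by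
        intro x hfx
        by_contra hlt
        push_neg at hlt
        obtain ⟨y, hy⟩ := hUne
        have hxcl : x ∈ closure {z | f z < (α : EReal)} :=
          mem_closure_sublevel hfconv hfx hy
        have hopen : IsOpen {z | g z < (α : EReal)} := isOpen_lt hgcont continuous_const
        obtain ⟨z, hz1, hz2⟩ := _root_.mem_closure_iff.1 hxcl _ hopen hlt
        exact hIP' z hz2 hz1
      have hgf : ∀ x, g x ≤ (α : EReal) → (α : EReal) ≤ f x := by
        intro x hgx
        by_contra hlt
        push_neg at hlt
        obtain ⟨y, hy⟩ := hVne
        have hxcl : x ∈ closure {z | g z < (α : EReal)} :=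
          mem_closure_sublevel hgconv hgx hy
        have hopen : IsOpen {z | f z < (α : EReal)} := isOpen_lt hfcont continuous_const
        obtain ⟨z, hz1, hz2⟩ := _root_.mem_closure_iff.1 hxcl _ hopen hlt
        exact hIP' z hz1 hz2
      have hfxb : f xb = (α : EReal) := le_antisymm hxbf (hgf xb hxbg)
      have hgxb : g xb = (α : EReal) := le_antisymm hxbg (hfg xb hxbf)
      have hUo : IsOpen {z | f z < (α : EReal)} := isOpen_lt hfcont continuous_const
      have hUc : Convex ℝ {z | f z < (α : EReal)} := sublevel_convex hfconv α
      obtain ⟨y, hy⟩ := hUne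
      have hxbU : xb ∈ closure {z | f z < (α : EReal)} := mem_closure_sublevel hfconv hxbf hy
      have hgeU : ∀ x ∈ {z | f z < (α : EReal)}, (α : EReal) ≤ g x :=
        fun x hx => hfg x (le_of_lt hx)
      obtain ⟨ℓg, hℓg1, hℓg2⟩ := key_subgrad hgconv hgcont hUo hUc hxbU hgxb hgeU
      refine ⟨xb, hfdom, xb, hgdom, ?_⟩
      by_cases hW : ∃ w, ℓg w < ℓg xb
      · -- both directions nontrivial
        set W : Set X := {z | ℓg z < ℓg xb} with hWdef
        have hWo : IsOpen W := isOpen_lt ℓg.continuous continuous_const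
        have hWc : Convex ℝ W :=
          convex_halfSpace_lt ⟨fun a b => map_add ℓg a b, fun c a => map_smul ℓg c a⟩ _
        have hxbW : xb ∈ closure W := by
          obtain ⟨w, hw⟩ := hW
          have hcv : ERealConvexOn (fun x => ((ℓg x : ℝ) : EReal)) := by
            intro a b t ht ht1
            apply le_of_eq
            show ((ℓg (t • a + (1 - t) • b) : ℝ) : EReal) =
              (t : EReal) * ((ℓg a : ℝ) : EReal) + ((1 - t : ℝ) : EReal) * ((ℓg b : ℝ) : EReal)
            rw [map_add, map_smul, map_smul, smul_eq_mul, smul_eq_mul,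
              ← EReal.coe_mul, ← EReal.coe_mul, ← EReal.coe_add]
          have := mem_closure_sublevel (f := fun x => ((ℓg x : ℝ) : EReal))
            (α := ℓg xb) hcv (le_refl _) (EReal.coe_lt_coe_iff.2 hw)
          have hseteq : {x | ((ℓg x : ℝ) : EReal) < ((ℓg xb : ℝ) : EReal)} = W := by
            ext z
            exact EReal.coe_lt_coe_iff
          rwa [hseteq] at this
        have hfgeW : ∀ x ∈ W, (α : EReal) ≤ f x := by
          intro x hx
          by_contra hlt
          push_neg at hlt
          exact absurd (hℓg2 x hlt) (not_le.2 hx)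
        obtain ⟨ℓf, hℓf1, hℓf2⟩ := key_subgrad hfconv hfcont hWo hWc hxbW hfxb hfgeW
        refine ⟨fun x => ℓf x + (α - ℓf xb), affine_mem_subdiff hfxb ℓf hℓf1,
          fun x => ℓg x + (α - ℓg xb), affine_mem_subdiff hgxb ℓg hℓg1, ?_⟩
        intro β hβ
        rw [IntersectionProperty, Set.eq_empty_iff_forall_notMem]
        rintro x ⟨h1, h2⟩
        rw [Set.mem_setOf_eq] at h1 h2
        have hxW : x ∈ W := by
          rw [hWdef, Set.mem_setOf_eq]
          linarith
        have := hℓf2 x hxW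
        linarith
      · -- ℓg is minimized at xb : φ₂ ≥ α everywhere
        push_neg at hW
        obtain ⟨ℓ, hℓ⟩ := exists_subgrad_aux hfconv hfcont hfxb
        refine ⟨fun x => ℓ x + (α - ℓ xb), affine_mem_subdiff hfxb ℓ hℓ,
          fun x => ℓg x + (α - ℓg xb), affine_mem_subdiff hgxb ℓg hℓg1, ?_⟩
        intro β hβ
        rw [IntersectionProperty, Set.eq_empty_iff_forall_notMem]
        rintro x ⟨h1, h2⟩
        rw [Set.mem_setOf_eq] at h1 h2
        have := hW x
        linarith
    · -- g ≥ α everywhere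
      push_neg at hVne
      have hgxb : g xb = (α : EReal) := le_antisymm hxbg (hVne xb)
      obtain ⟨v, hv⟩ : ∃ v : ℝ, f xb = (v : EReal) :=
        ⟨(f xb).toReal, (EReal.coe_toReal hfdom (hfbot xb)).symm⟩
      obtain ⟨ℓ, hℓ⟩ := exists_subgrad_aux hfconv hfcont hv
      have hgconst : ∀ x, ((α + ((0 : X →L[ℝ] ℝ) x - (0 : X →L[ℝ] ℝ) xb) : ℝ) : EReal) ≤ g x := by
        intro x
        simpa using hVne x
      refine ⟨xb, hfdom, xb, hgdom, fun x => ℓ x + (v - ℓ xb), affine_mem_subdiff hv ℓ hℓ,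
        fun x => (0 : X →L[ℝ] ℝ) x + (α - (0 : X →L[ℝ] ℝ) xb),
        affine_mem_subdiff hgxb 0 hgconst, ?_⟩
      intro β hβ
      rw [IntersectionProperty, Set.eq_empty_iff_forall_notMem]
      rintro x ⟨h1, h2⟩
      rw [Set.mem_setOf_eq] at h2
      simp only [ContinuousLinearMap.zero_apply] at h2
      linarith
  · -- f ≥ α everywhere
    push_neg at hUne
    have hfxb : f xb = (α : EReal) := le_antisymm hxbf (hUne xb)
    obtain ⟨v, hv⟩ : ∃ v : ℝ, g xb = (v : EReal) :=
      ⟨(g xb).toReal, (EReal.coe_toReal hgdom (hgbot xb)).symm⟩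
    obtain ⟨ℓ, hℓ⟩ := exists_subgrad_aux hgconv hgcont hv
    have hfconst : ∀ x, ((α + ((0 : X →L[ℝ] ℝ) x - (0 : X →L[ℝ] ℝ) xb) : ℝ) : EReal) ≤ f x := by
      intro x
      simpa using hUne x
    refine ⟨xb, hfdom, xb, hgdom,
      fun x => (0 : X →L[ℝ] ℝ) x + (α - (0 : X →L[ℝ] ℝ) xb),
      affine_mem_subdiff hfxb 0 hfconst, fun x => ℓ x + (v - ℓ xb), affine_mem_subdiff hv ℓ hℓ, ?_⟩
    intro β hβ
    rw [IntersectionProperty, Set.eq_empty_iff_forall_notMem]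
    rintro x ⟨h1, h2⟩
    rw [Set.mem_setOf_eq] at h1
    simp only [ContinuousLinearMap.zero_apply] at h1
    linarith
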